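/- Let P and Q be Borel probability measures on ℝ supported in [−R, R]. Then the squared 2-Wasserstein distance satisfies D(P,Q) ≤ 2R·∫_ℝ |F_P(z) − F_Q(z)| dz ≤ 4R²·sup_{z∈ℝ} |F_P(z) − F_Q(z)|; in particular it is bounded by 4R² times the Kolmogorov distance between P and Q. -/

import Mathlib

open MeasureTheory ProbabilityTheory
open scoped RealInnerProductSpace ENNReal

noncomputable section

/-- Squared 2-Wasserstein distance between Borel probability measures on ℝ. -/
def sqW2 (P Q : Measure ℝ) : ℝ :=
  sInf {r : ℝ | ∃ π : Measure (ℝ × ℝ), IsProbabilityMeasure π ∧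
    π.fst = P ∧ π.snd = Q ∧ r = ∫ p : ℝ × ℝ, (p.1 - p.2) ^ 2 ∂π}

/-- 1-Wasserstein distance. -/
def W1 (P Q : Measure ℝ) : ℝ :=
  sInf {r : ℝ | ∃ π : Measure (ℝ × ℝ), IsProbabilityMeasure π ∧
    π.fst = P ∧ π.snd = Q ∧ r = ∫ p : ℝ × ℝ, |p.1 - p.2| ∂π}

/-- Pushforward of a measure on ℝ^d under the projection x ↦ βᵀx. -/
def proj {d : ℕ} (β : EuclideanSpace ℝ (Fin d)) (μ : Measure (EuclideanSpace ℝ (Fin d))) :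
    Measure ℝ := μ.map (fun x => ⟪β, x⟫)

/-- Empirical measure of a finite tuple of points. -/
def emp {α : Type*} [MeasurableSpace α] {n : ℕ} (xs : Fin n → α) : Measure α :=
  (n : ℝ≥0∞)⁻¹ • ∑ i, Measure.dirac (xs i)

/-- The feasible set B = {β : ‖β‖₂ ≤ 1, β₁ ≥ 0}. -/
def ballB (d : ℕ) (hd : 0 < d) : Set (EuclideanSpace ℝ (Fin d)) :=
  {β | ‖β‖ ≤ 1 ∧ 0 ≤ β ⟨0, hd⟩}

/-- μ admits a continuous density supported in (and nonzero on) the Euclidean ball of radius R. -/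
def HasContDensityBall {d : ℕ} (R : ℝ) (μ : Measure (EuclideanSpace ℝ (Fin d))) : Prop :=
  ∃ f : EuclideanSpace ℝ (Fin d) → ℝ, Continuous f ∧ (∀ x, 0 ≤ f x) ∧
    (∀ x, 0 < f x ↔ x ∈ Metric.ball (0 : EuclideanSpace ℝ (Fin d)) R) ∧
    μ = volume.withDensity (fun x => ENNReal.ofReal (f x))

/-- Cumulative distribution function of a measure on ℝ. -/
def mcdf (μ : Measure ℝ) (z : ℝ) : ℝ := (μ (Set.Iic z)).toReal

/-- Quantile function. -/
def quant (μ : Measure ℝ) (p : ℝ) : ℝ := sInf {x : ℝ | p ≤ mcdf μ x}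

/-- Kolmogorov distance. -/
def kolm (P Q : Measure ℝ) : ℝ := ⨆ z : ℝ, |mcdf P z - mcdf Q z|

/-- Lévy distance. -/
def levy (P Q : Measure ℝ) : ℝ :=
  sInf {ε : ℝ | 0 < ε ∧ ∀ x : ℝ, mcdf Q (x - ε) - ε ≤ mcdf P x ∧ mcdf P x ≤ mcdf Q (x + ε) + ε}

/-- Lévy–Prokhorov distance. -/
def prokh (P Q : Measure ℝ) : ℝ :=
  sInf {ε : ℝ | 0 < ε ∧ ∀ A : Set ℝ, MeasurableSet A →
    (P A).toReal ≤ (Q (Metric.thickening ε A)).toReal + ε ∧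
    (Q A).toReal ≤ (P (Metric.thickening ε A)).toReal + ε}

/-- i.i.d. samples with a given law. -/
def IIDSamples {Ω α ι : Type*} [MeasurableSpace Ω] [MeasurableSpace α]
    (P : Measure Ω) (Zs : ι → Ω → α) (law : Measure α) : Prop :=
  iIndepFun Zs P ∧
    ∀ i, Measurable (Zs i) ∧ P.map (Zs i) = law

/-- Supremum of densities of projections of ν along directions in B. -/
def projDensitySup {d : ℕ} (hd : 0 < d) (ν : Measure (EuclideanSpace ℝ (Fin d))) : ℝ :=
  sSup {z : ℝ | ∃ α ∈ ballB d hd, ∃ y : ℝ, z = ((proj α ν).rnDeriv volume y).toReal}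

/-- ℓ¹ norm of the covariance matrix of X. -/
def covL1 {Ω : Type*} [MeasurableSpace Ω] (P : Measure Ω) {d : ℕ}
    (X : Ω → EuclideanSpace ℝ (Fin d)) : ℝ :=
  ∑ i, ∑ j, |(∫ ω, X ω i * X ω j ∂P) - (∫ ω, X ω i ∂P) * (∫ ω, X ω j ∂P)|

/-- T_a(X,Y). -/
def Ta {Ω : Type*} [MeasurableSpace Ω] (P : Measure Ω) {d : ℕ}
    (X Y : Ω → EuclideanSpace ℝ (Fin d)) (a : ℝ) : ℝ :=
  |(P {ω | ∀ i, |X ω i| ≤ a}).toReal - (P {ω | ∀ i, |Y ω i| ≤ a}).toReal|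

section W2auxSection
set_option linter.unusedSectionVars false
open Set

namespace W2aux

lemma mcdf_nonneg (μ : Measure ℝ) (z : ℝ) : 0 ≤ mcdf μ z := ENNReal.toReal_nonneg

lemma mcdf_le_one (μ : Measure ℝ) [IsProbabilityMeasure μ] (z : ℝ) : mcdf μ z ≤ 1 := by
  have h : μ (Set.Iic z) ≤ 1 := prob_le_one
  calc (μ (Set.Iic z)).toReal ≤ (1 : ℝ≥0∞).toReal := ENNReal.toReal_mono ENNReal.one_ne_top h
  _ = 1 := by simp

lemma mcdf_mono (μ : Measure ℝ) [IsFiniteMeasure μ] : Monotone (mcdf μ) := fun a b hab =>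
  ENNReal.toReal_mono (measure_ne_top _ _) (measure_mono (Iic_subset_Iic.2 hab))

lemma ofReal_mcdf (μ : Measure ℝ) [IsFiniteMeasure μ] (z : ℝ) :
    ENNReal.ofReal (mcdf μ z) = μ (Set.Iic z) := ENNReal.ofReal_toReal (measure_ne_top _ _)

lemma mcdf_eq_cdf (μ : Measure ℝ) [IsProbabilityMeasure μ] : mcdf μ = cdf μ :=
  funext fun x => (cdf_eq_real μ x).symm

variable {P : Measure ℝ} [IsProbabilityMeasure P] {R : ℝ}

lemma mcdf_eq_zero (hPs : P (Set.Icc (-R) R)ᶜ = 0) {x : ℝ} (hx : x < -R) : mcdf P x = 0 := by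
  have h : P (Set.Iic x) = 0 := measure_mono_null
    (fun y hy => by
      simp only [Set.mem_Iic] at hy
      simp only [Set.mem_compl_iff, Set.mem_Icc, not_and, not_le]
      intro h'; linarith) hPs
  simp [mcdf, h]

lemma mcdf_eq_one (hPs : P (Set.Icc (-R) R)ᶜ = 0) {x : ℝ} (hx : R ≤ x) : mcdf P x = 1 := by
  have h0 : P (Set.Iic x)ᶜ = 0 := measure_mono_null
    (fun y hy => by
      simp only [Set.mem_compl_iff, Set.mem_Iic, not_le] at hy
      simp only [Set.mem_compl_iff, Set.mem_Icc, not_and, not_le]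
      intro h'; linarith) hPs
  have h1 : P (Set.Iic x) = 1 := (prob_compl_eq_zero_iff measurableSet_Iic).1 h0
  simp [mcdf, h1]

lemma quant_lb (hPs : P (Set.Icc (-R) R)ᶜ = 0) {p : ℝ} (hp : 0 < p) :
    ∀ y ∈ {x : ℝ | p ≤ mcdf P x}, -R ≤ y := by
  intro y hy
  by_contra h
  push_neg at h
  have := mcdf_eq_zero hPs h
  simp only [Set.mem_setOf_eq, this] at hy
  linarith

lemma quant_le_iff (hPs : P (Set.Icc (-R) R)ᶜ = 0) {p : ℝ} (hp : p ∈ Set.Ioo (0:ℝ) 1) (x : ℝ) :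
    quant P p ≤ x ↔ p ≤ mcdf P x := by
  have hne : {x : ℝ | p ≤ mcdf P x}.Nonempty :=
    ⟨R, by simp only [Set.mem_setOf_eq, mcdf_eq_one hPs le_rfl]; exact hp.2.le⟩
  have hbd : BddBelow {x : ℝ | p ≤ mcdf P x} := ⟨-R, quant_lb hPs hp.1⟩
  constructor
  · intro h
    have key : p ≤ mcdf P (quant P p) := by
      have hcont := (cdf P).right_continuous (quant P p)
      have h2 : Filter.Tendsto (cdf P) (nhdsWithin (quant P p) (Set.Ioi (quant P p)))
          (nhds (cdf P (quant P p))) :=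
        hcont.tendsto.mono_left (nhdsWithin_mono _ Set.Ioi_subset_Ici_self)
      have h3 : ∀ᶠ y in nhdsWithin (quant P p) (Set.Ioi (quant P p)), p ≤ cdf P y := by
        filter_upwards [self_mem_nhdsWithin] with y hy
        obtain ⟨s, hs, hsy⟩ := (csInf_lt_iff hbd hne).1 hy
        have : p ≤ mcdf P y := le_trans hs (mcdf_mono P hsy.le)
        rwa [mcdf_eq_cdf] at this
      have := ge_of_tendsto h2 h3
      rwa [mcdf_eq_cdf]
    exact key.trans (mcdf_mono P h)
  · intro h
    exact csInf_le hbd h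

lemma quant_mem_Icc (hPs : P (Set.Icc (-R) R)ᶜ = 0) {p : ℝ} (hp : p ∈ Set.Ioo (0:ℝ) 1) :
    quant P p ∈ Set.Icc (-R) R := by
  have hne : {x : ℝ | p ≤ mcdf P x}.Nonempty :=
    ⟨R, by simp only [Set.mem_setOf_eq, mcdf_eq_one hPs le_rfl]; exact hp.2.le⟩
  constructor
  · exact le_csInf hne (quant_lb hPs hp.1)
  · exact (quant_le_iff hPs hp R).2 (by rw [mcdf_eq_one hPs le_rfl]; exact hp.2.le)


/-- Measurable modification of `quant` with fallback value `R`. -/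
def qext (P : Measure ℝ) (R : ℝ) : ℝ → ℝ := (Set.Ioo (0:ℝ) 1).piecewise (quant P) (fun _ => R)

lemma qext_eq_quant {p : ℝ} (hp : p ∈ Set.Ioo (0:ℝ) 1) : qext P R p = quant P p :=
  Set.piecewise_eq_of_mem _ _ _ hp

lemma qext_mem_Icc (hPs : P (Set.Icc (-R) R)ᶜ = 0) (hR : 0 ≤ R) (p : ℝ) :
    qext P R p ∈ Set.Icc (-R) R := by
  rcases Classical.em (p ∈ Set.Ioo (0:ℝ) 1) with h | h
  · rw [qext_eq_quant h]; exact quant_mem_Icc hPs h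
  · rw [qext, Set.piecewise_eq_of_notMem _ _ _ h]
    exact ⟨by linarith, le_rfl⟩

lemma measurable_qext (hPs : P (Set.Icc (-R) R)ᶜ = 0) : Measurable (qext P R) := by
  apply measurable_of_Iic
  intro x
  rw [qext, Set.piecewise_preimage]
  have h1 : Set.Ioo (0:ℝ) 1 ∩ quant P ⁻¹' Set.Iic x
      = Set.Ioo (0:ℝ) 1 ∩ Set.Iic (mcdf P x) := by
    ext p
    simp only [Set.mem_inter_iff, Set.mem_preimage, Set.mem_Iic, and_congr_right_iff]
    intro hp
    exact quant_le_iff hPs hp x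
  rw [Set.ite, diff_eq]
  refine MeasurableSet.union ?_ ?_
  · rw [Set.inter_comm, h1]; exact measurableSet_Ioo.inter measurableSet_Iic
  · exact ((measurable_const (a := R)) measurableSet_Iic).inter measurableSet_Ioo.compl

lemma vol_Ioo_inter_Iic {c : ℝ} (h0 : 0 ≤ c) (h1 : c ≤ 1) :
    volume (Set.Ioo (0:ℝ) 1 ∩ Set.Iic c) = ENNReal.ofReal c := by
  rcases lt_or_eq_of_le h1 with h | h
  · have he : Set.Ioo (0:ℝ) 1 ∩ Set.Iic c = Set.Ioc 0 c := by
      ext p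
      simp only [Set.mem_inter_iff, Set.mem_Ioo, Set.mem_Iic, Set.mem_Ioc]
      constructor
      · rintro ⟨⟨ha, _⟩, hc⟩; exact ⟨ha, hc⟩
      · rintro ⟨ha, hc⟩; exact ⟨⟨ha, lt_of_le_of_lt hc h⟩, hc⟩
    rw [he, Real.volume_Ioc, sub_zero]
  · subst h
    have he : Set.Ioo (0:ℝ) 1 ∩ Set.Iic 1 = Set.Ioo (0:ℝ) 1 :=
      Set.inter_eq_left.2 (fun p hp => hp.2.le)
    rw [he, Real.volume_Ioo, sub_zero]

lemma vol_Ioo_inter_Ioc {a b : ℝ} (h0 : 0 ≤ a) (hab : a ≤ b) (h1 : b ≤ 1) :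
    volume (Set.Ioo (0:ℝ) 1 ∩ Set.Ioc a b) = ENNReal.ofReal (b - a) := by
  rcases lt_or_eq_of_le h1 with h | h
  · have he : Set.Ioo (0:ℝ) 1 ∩ Set.Ioc a b = Set.Ioc a b := by
      ext p
      simp only [Set.mem_inter_iff, Set.mem_Ioo, Set.mem_Ioc]
      constructor
      · rintro ⟨_, hc⟩; exact hc
      · rintro ⟨ha, hb⟩
        exact ⟨⟨lt_of_le_of_lt h0 ha, lt_of_le_of_lt hb h⟩, ha, hb⟩
    rw [he, Real.volume_Ioc]
  · subst h
    have he : Set.Ioo (0:ℝ) 1 ∩ Set.Ioc a 1 = Set.Ioo a 1 := by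
      ext p
      simp only [Set.mem_inter_iff, Set.mem_Ioo, Set.mem_Ioc]
      constructor
      · rintro ⟨⟨_, h2⟩, h3, _⟩; exact ⟨h3, h2⟩
      · rintro ⟨h3, h2⟩
        exact ⟨⟨lt_of_le_of_lt h0 h3, h2⟩, h3, le_of_lt h2⟩
    rw [he, Real.volume_Ioo]

lemma vol_Iic_symmdiff {a b : ℝ} (hab : a ≤ b) (h0 : 0 ≤ a) (h1 : b ≤ 1) :
    volume (Set.Ioo (0:ℝ) 1 ∩ ((Set.Iic a \ Set.Iic b) ∪ (Set.Iic b \ Set.Iic a)))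
      = ENNReal.ofReal (b - a) := by
  have h1' : Set.Iic a \ Set.Iic b = ∅ := Set.diff_eq_empty.2 (Set.Iic_subset_Iic.2 hab)
  rw [h1', Set.empty_union, Set.Iic_sdiff_Iic]
  exact vol_Ioo_inter_Ioc h0 hab h1

lemma vol_Ici_symmdiff {a b : ℝ} (hab : a ≤ b) :
    volume ((Set.Ici a \ Set.Ici b) ∪ (Set.Ici b \ Set.Ici a)) = ENNReal.ofReal (b - a) := by
  have h1' : Set.Ici b \ Set.Ici a = ∅ := Set.diff_eq_empty.2 (Set.Ici_subset_Ici.2 hab)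
  rw [h1', Set.union_empty, Set.Ici_diff_Ici, Real.volume_Ico]

instance : IsProbabilityMeasure (volume.restrict (Set.Ioo (0:ℝ) 1)) :=
  ⟨by rw [Measure.restrict_apply_univ, Real.volume_Ioo]; norm_num⟩

lemma map_qext (hPs : P (Set.Icc (-R) R)ᶜ = 0) :
    (volume.restrict (Set.Ioo (0:ℝ) 1)).map (qext P R) = P := by
  have hm := measurable_qext hPs
  haveI : IsProbabilityMeasure ((volume.restrict (Set.Ioo (0:ℝ) 1)).map (qext P R)) :=
    Measure.isProbabilityMeasure_map hm.aemeasurable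
  refine Measure.ext_of_Iic _ _ (fun x => ?_)
  rw [Measure.map_apply hm measurableSet_Iic,
    Measure.restrict_apply (hm measurableSet_Iic)]
  have hpre : qext P R ⁻¹' Set.Iic x ∩ Set.Ioo 0 1
      = Set.Ioo (0:ℝ) 1 ∩ Set.Iic (mcdf P x) := by
    ext p
    simp only [Set.mem_inter_iff, Set.mem_preimage, Set.mem_Iic]
    constructor
    · rintro ⟨h1, h2⟩
      refine ⟨h2, ?_⟩
      rw [qext_eq_quant h2] at h1
      exact (quant_le_iff hPs h2 x).1 h1
    · rintro ⟨h2, h1⟩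
      exact ⟨by rw [qext_eq_quant h2]; exact (quant_le_iff hPs h2 x).2 h1, h2⟩
  rw [hpre, vol_Ioo_inter_Iic (mcdf_nonneg P x) (mcdf_le_one P x), ofReal_mcdf]


lemma key_eq (P Q : Measure ℝ) [IsProbabilityMeasure P] [IsProbabilityMeasure Q] {R : ℝ}
    (hPs : P (Set.Icc (-R) R)ᶜ = 0) (hQs : Q (Set.Icc (-R) R)ᶜ = 0) :
    ∫⁻ p, ENNReal.ofReal |qext P R p - qext Q R p| ∂(volume.restrict (Set.Ioo (0:ℝ) 1))
      = ∫⁻ z, ENNReal.ofReal |mcdf P z - mcdf Q z| := by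
  set μ₀ := volume.restrict (Set.Ioo (0:ℝ) 1) with hμ₀
  set A : Set (ℝ × ℝ) := {q | q.1 ≤ mcdf P q.2} with hA
  set B : Set (ℝ × ℝ) := {q | q.1 ≤ mcdf Q q.2} with hB
  have hAm : MeasurableSet A :=
    measurableSet_le measurable_fst ((mcdf_mono P).measurable.comp measurable_snd)
  have hBm : MeasurableSet B :=
    measurableSet_le measurable_fst ((mcdf_mono Q).measurable.comp measurable_snd)
  set E := (A \ B) ∪ (B \ A) with hE
  have hEm : MeasurableSet E := (hAm.diff hBm).union (hBm.diff hAm)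
  have h1 : (μ₀.prod volume) E = ∫⁻ p, volume (Prod.mk p ⁻¹' E) ∂μ₀ :=
    Measure.prod_apply hEm
  have h2 : (μ₀.prod volume) E = ∫⁻ z, μ₀ ((fun p => (p, z)) ⁻¹' E) ∂volume :=
    Measure.prod_apply_symm hEm
  have h1' : ∫⁻ p, volume (Prod.mk p ⁻¹' E) ∂μ₀
      = ∫⁻ p, ENNReal.ofReal |qext P R p - qext Q R p| ∂μ₀ := by
    refine lintegral_congr_ae ?_
    filter_upwards [ae_restrict_mem measurableSet_Ioo] with p hp
    have hslice : Prod.mk p ⁻¹' E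
        = (Set.Ici (quant P p) \ Set.Ici (quant Q p))
          ∪ (Set.Ici (quant Q p) \ Set.Ici (quant P p)) := by
      ext z
      simp only [hE, hA, hB, Set.mem_preimage, Set.mem_union, Set.mem_diff,
        Set.mem_setOf_eq, Set.mem_Ici]
      rw [← quant_le_iff hPs hp z, ← quant_le_iff hQs hp z]
    rw [hslice, qext_eq_quant hp, qext_eq_quant hp]
    rcases le_total (quant P p) (quant Q p) with h | h
    · rw [vol_Ici_symmdiff h, abs_sub_comm, abs_of_nonneg (by linarith)]
    · rw [Set.union_comm, vol_Ici_symmdiff h, abs_of_nonneg (by linarith)]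
  have h2' : ∫⁻ z, μ₀ ((fun p => (p, z)) ⁻¹' E) ∂volume
      = ∫⁻ z, ENNReal.ofReal |mcdf P z - mcdf Q z| := by
    refine lintegral_congr (fun z => ?_)
    have hsm : MeasurableSet ((fun p => (p, z)) ⁻¹' E) := hEm.preimage measurable_prodMk_right
    rw [hμ₀, Measure.restrict_apply hsm]
    have hslice : (fun p => (p, z)) ⁻¹' E
        = (Set.Iic (mcdf P z) \ Set.Iic (mcdf Q z))
          ∪ (Set.Iic (mcdf Q z) \ Set.Iic (mcdf P z)) := by
      ext p
      simp only [hE, hA, hB, Set.mem_preimage, Set.mem_union, Set.mem_diff,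
        Set.mem_setOf_eq, Set.mem_Iic]
    rw [hslice, Set.inter_comm]
    rcases le_total (mcdf P z) (mcdf Q z) with h | h
    · rw [vol_Iic_symmdiff h (mcdf_nonneg P z) (mcdf_le_one Q z), abs_sub_comm,
        abs_of_nonneg (by linarith)]
    · rw [Set.union_comm, vol_Iic_symmdiff h (mcdf_nonneg Q z) (mcdf_le_one P z),
        abs_of_nonneg (by linarith)]
  rw [← h1', ← h2', ← h1, ← h2]


end W2aux
end W2auxSection

open W2aux Set

theorem stmt8 (P Q : Measure ℝ) [IsProbabilityMeasure P] [IsProbabilityMeasure Q]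
    (R : ℝ) (hR : 0 ≤ R)
    (hPs : P (Set.Icc (-R) R)ᶜ = 0) (hQs : Q (Set.Icc (-R) R)ᶜ = 0) :
    sqW2 P Q ≤ 2 * R * ∫ z : ℝ, |mcdf P z - mcdf Q z| ∧
    2 * R * (∫ z : ℝ, |mcdf P z - mcdf Q z|) ≤ 4 * R ^ 2 * kolm P Q ∧
    sqW2 P Q ≤ 4 * R ^ 2 * kolm P Q := by
  set μ₀ := volume.restrict (Set.Ioo (0:ℝ) 1) with hμ₀
  set f := qext P R with hfd
  set g := qext Q R with hgd
  have hf : Measurable f := measurable_qext hPs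
  have hg : Measurable g := measurable_qext hQs
  have hfmem := qext_mem_Icc hPs hR
  have hgmem := qext_mem_Icc hQs hR
  have hbound : ∀ p, |f p - g p| ≤ 2 * R := by
    intro p
    have h1 := hfmem p; have h2 := hgmem p
    rw [Set.mem_Icc] at h1 h2
    rw [abs_le]; constructor <;> [linarith [h1.1, h2.2]; linarith [h1.2, h2.1]]
  have hptw : ∀ p, (f p - g p) ^ 2 ≤ 2 * R * |f p - g p| := by
    intro p
    nlinarith [sq_abs (f p - g p), hbound p, abs_nonneg (f p - g p)]
  have hGmeas : Measurable fun z => |mcdf P z - mcdf Q z| :=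
    ((mcdf_mono P).measurable.sub (mcdf_mono Q).measurable).abs
  have hDmeas : Measurable fun p => |f p - g p| := (hf.sub hg).abs
  -- finiteness of the cdf-difference lintegral
  have hlt : ∫⁻ z, ENNReal.ofReal |mcdf P z - mcdf Q z| < ⊤ := by
    rw [← key_eq P Q hPs hQs]
    calc ∫⁻ p, ENNReal.ofReal |qext P R p - qext Q R p| ∂μ₀
        ≤ ∫⁻ _, ENNReal.ofReal (2 * R) ∂μ₀ :=
          lintegral_mono fun p => ENNReal.ofReal_le_ofReal (hbound p)
      _ = ENNReal.ofReal (2 * R) := by rw [lintegral_const, measure_univ, mul_one]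
      _ < ⊤ := ENNReal.ofReal_lt_top
  have hIg : Integrable (fun z => |mcdf P z - mcdf Q z|) volume := by
    refine ⟨hGmeas.aestronglyMeasurable, ?_⟩
    rw [hasFiniteIntegral_iff_ofReal (Filter.Eventually.of_forall fun z => abs_nonneg _)]
    exact hlt
  have hI1 : Integrable (fun p => |f p - g p|) μ₀ :=
    Integrable.mono' (integrable_const (2 * R)) hDmeas.aestronglyMeasurable
      (Filter.Eventually.of_forall fun p => by
        simp only [Real.norm_eq_abs, abs_abs]
        exact hbound p)
  have hI2 : Integrable (fun p => (f p - g p) ^ 2) μ₀ :=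
    Integrable.mono' (integrable_const (2 * R * (2 * R))) ((hf.sub hg).pow_const 2).aestronglyMeasurable
      (Filter.Eventually.of_forall fun p => by
        have h1 := hbound p
        have h2 := abs_nonneg (f p - g p)
        simp only [Real.norm_eq_abs, abs_pow, sq_abs]
        nlinarith [sq_abs (f p - g p)])
  have heqint : ∫ p, |f p - g p| ∂μ₀ = ∫ z, |mcdf P z - mcdf Q z| := by
    rw [integral_eq_lintegral_of_nonneg_ae (Filter.Eventually.of_forall fun p => abs_nonneg _)
        hDmeas.aestronglyMeasurable,
      integral_eq_lintegral_of_nonneg_ae (Filter.Eventually.of_forall fun z => abs_nonneg _)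
        hGmeas.aestronglyMeasurable]
    rw [hfd, hgd, key_eq P Q hPs hQs]
  -- Part 1
  set π := μ₀.map (fun p => (f p, g p)) with hπd
  have hpair : Measurable fun p => (f p, g p) := hf.prodMk hg
  haveI hπprob : IsProbabilityMeasure π := Measure.isProbabilityMeasure_map hpair.aemeasurable
  have hfst : π.fst = P := by rw [hπd, Measure.fst_map_prodMk hg, hfd, map_qext hPs]
  have hsnd : π.snd = Q := by rw [hπd, Measure.snd_map_prodMk hf, hgd, map_qext hQs]
  have hbddb : BddBelow {r : ℝ | ∃ π : Measure (ℝ × ℝ), IsProbabilityMeasure π ∧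
      π.fst = P ∧ π.snd = Q ∧ r = ∫ p : ℝ × ℝ, (p.1 - p.2) ^ 2 ∂π} := by
    refine ⟨0, fun r hr => ?_⟩
    obtain ⟨π', h1, h2, h3, rfl⟩ := hr
    exact integral_nonneg fun q => sq_nonneg _
  have hW : sqW2 P Q ≤ ∫ q : ℝ × ℝ, (q.1 - q.2) ^ 2 ∂π :=
    csInf_le hbddb ⟨π, hπprob, hfst, hsnd, rfl⟩
  have hmap : ∫ q : ℝ × ℝ, (q.1 - q.2) ^ 2 ∂π = ∫ p, (f p - g p) ^ 2 ∂μ₀ := by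
    rw [hπd, integral_map hpair.aemeasurable (f := fun q : ℝ × ℝ => (q.1 - q.2) ^ 2)
      ((continuous_fst.sub continuous_snd).pow 2).aestronglyMeasurable]
  have hmono : ∫ p, (f p - g p) ^ 2 ∂μ₀ ≤ ∫ p, 2 * R * |f p - g p| ∂μ₀ :=
    integral_mono hI2 (hI1.const_mul (2 * R)) hptw
  have part1 : sqW2 P Q ≤ 2 * R * ∫ z : ℝ, |mcdf P z - mcdf Q z| := by
    rw [← heqint, ← integral_const_mul]
    exact (hW.trans_eq hmap).trans hmono
  -- Part 2
  have hub : ∀ z : ℝ, |mcdf P z - mcdf Q z| ≤ 1 := fun z => by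
    have h1 := mcdf_nonneg P z; have h2 := mcdf_le_one P z
    have h3 := mcdf_nonneg Q z; have h4 := mcdf_le_one Q z
    rw [abs_le]; constructor <;> linarith
  have hK0 : ∀ z, |mcdf P z - mcdf Q z| ≤ kolm P Q := by
    intro z
    have hbdd : BddAbove (Set.range fun y => |mcdf P y - mcdf Q y|) :=
      ⟨1, by rintro _ ⟨y, rfl⟩; exact hub y⟩
    exact le_ciSup hbdd z
  have hindic : (fun z => |mcdf P z - mcdf Q z|)
      = (Set.Ico (-R) R).indicator (fun z => |mcdf P z - mcdf Q z|) := by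
    funext z
    rcases Classical.em (z ∈ Set.Ico (-R) R) with h | h
    · rw [Set.indicator_of_mem h]
    · rw [Set.indicator_of_notMem h]
      rw [Set.mem_Ico, not_and_or, not_le, not_lt] at h
      rcases h with h | h
      · rw [mcdf_eq_zero hPs h, mcdf_eq_zero hQs h, sub_zero, abs_zero]
      · rw [mcdf_eq_one hPs h, mcdf_eq_one hQs h, sub_self, abs_zero]
  have part2' : (∫ z : ℝ, |mcdf P z - mcdf Q z|) ≤ 2 * R * kolm P Q := by
    calc ∫ z : ℝ, |mcdf P z - mcdf Q z|
        = ∫ z in Set.Ico (-R) R, |mcdf P z - mcdf Q z| := by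
          conv_lhs => rw [hindic]
          rw [integral_indicator measurableSet_Ico]
      _ ≤ ∫ _ in Set.Ico (-R) R, kolm P Q :=
          setIntegral_mono_on hIg.integrableOn
            (integrableOn_const (by rw [Real.volume_Ico]; exact ENNReal.ofReal_ne_top) (by simp))
            measurableSet_Ico (fun z _ => hK0 z)
      _ = 2 * R * kolm P Q := by
          rw [setIntegral_const, Real.volume_real_Ico, smul_eq_mul,
            max_eq_left (by linarith : (0:ℝ) ≤ R - -R)]
          ring
  have hint_nonneg : 0 ≤ ∫ z : ℝ, |mcdf P z - mcdf Q z| :=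
    integral_nonneg fun z => abs_nonneg _
  have part2 : 2 * R * (∫ z : ℝ, |mcdf P z - mcdf Q z|) ≤ 4 * R ^ 2 * kolm P Q := by
    have := mul_le_mul_of_nonneg_left part2' (by linarith : (0:ℝ) ≤ 2 * R)
    nlinarith [this]
  exact ⟨part1, part2, part1.trans part2⟩

end
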